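/- Let n ≥ 2, k ≥ 2 an integer, and m ≥ 1, and fix λ ∈ {1,…,k−1}. Suppose the set G of m goods is partitioned into sets T, S_1,…,S_{k−1}, B with |T| = n−1, |S_λ| ≥ m^{(2λ−1)/(2k−1)}, and B ≠ ∅. Let w : G → ℝ be given by w(g) = √k for g ∈ T, w(g) = m^{−2(λ−1)/(2k−1)} for g ∈ S_λ, w(g) = m^{−2ℓ/(2k−1)} for g ∈ S_ℓ with ℓ ≠ λ, and w(g) = 0 for g ∈ B. Let X be the allocation in which agent n−1 receives a single good from T (i.e., X_{n−1} = {g'} for some g' ∈ T) and agent n receives all goods in G \ T. Then w(X_{n−1}) = √k and w(X_n \ {g}) ≥ m^{1/(2k−1)} for every g ∈ B; consequently, for any valuation profile in which agent n−1 has the additive valuation w, the allocation X is not α-EFX for any α > √k · m^{−1/(2k−1)}. -/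

import Mathlib

/-- In the lower-bound instance (goods partitioned into
`T, S_1, …, S_{k-1}, B`, `|T| = n-1`, `|S_λ| ≥ m^((2λ-1)/(2k-1))`, `B ≠ ∅`) with the
valuation `w` that boosts the goods of `S_λ` to value `m^(-2(λ-1)/(2k-1))`: if agent
`n-1` gets a single good of `T` and agent `n` gets all goods outside `T`, then
`w(X_{n-1}) = √k`, `w(X_n \ {g}) ≥ m^(1/(2k-1))` for every `g ∈ B`, and for every
valuation profile where agent `n-1` has valuation `w` the allocation is not `α`-EFX for
any `α > √k · m^(-1/(2k-1))`. -/
theorem stmt_6 (n k m : ℕ) (hn : 2 ≤ n) (hk : 2 ≤ k) (hm : 1 ≤ m)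
    (lam : ℕ) (hlam1 : 1 ≤ lam) (hlamk : lam ≤ k - 1)
    (T B : Finset (Fin m)) (S : ℕ → Finset (Fin m))
    (hTcard : T.card = n - 1)
    (hSlam : (m : ℝ) ^ ((2 * (lam : ℝ) - 1) / (2 * (k : ℝ) - 1)) ≤ ((S lam).card : ℝ))
    (hB : B ≠ ∅)
    (hcoverG : ∀ g : Fin m, g ∈ T ∨ g ∈ B ∨ ∃ ℓ : ℕ, 1 ≤ ℓ ∧ ℓ ≤ k - 1 ∧ g ∈ S ℓ)
    (hTB : Disjoint T B)
    (hTS : ∀ ℓ : ℕ, 1 ≤ ℓ → ℓ ≤ k - 1 → Disjoint T (S ℓ))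
    (hBS : ∀ ℓ : ℕ, 1 ≤ ℓ → ℓ ≤ k - 1 → Disjoint B (S ℓ))
    (hSS : ∀ ℓ ℓ' : ℕ, 1 ≤ ℓ → ℓ ≤ k - 1 → 1 ≤ ℓ' → ℓ' ≤ k - 1 → ℓ ≠ ℓ' →
      Disjoint (S ℓ) (S ℓ'))
    (w : Fin m → ℝ)
    (hwT : ∀ g ∈ T, w g = Real.sqrt k)
    (hwSlam : ∀ g ∈ S lam, w g = (m : ℝ) ^ (-(2 * ((lam : ℝ) - 1)) / (2 * (k : ℝ) - 1)))
    (hwS : ∀ ℓ : ℕ, 1 ≤ ℓ → ℓ ≤ k - 1 → ℓ ≠ lam → ∀ g ∈ S ℓ,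
      w g = (m : ℝ) ^ (-(2 * (ℓ : ℝ)) / (2 * (k : ℝ) - 1)))
    (hwB : ∀ g ∈ B, w g = 0)
    (g' : Fin m) (hg' : g' ∈ T)
    (X : Fin n → Finset (Fin m))
    (hdisj : ∀ i j : Fin n, i ≠ j → Disjoint (X i) (X j))
    (hcover : ∀ g : Fin m, ∃ i : Fin n, g ∈ X i)
    (hXn1 : X ⟨n - 2, by omega⟩ = {g'})
    (hXn : X ⟨n - 1, by omega⟩ = Finset.univ \ T) :
    (X ⟨n - 2, by omega⟩).sum w = Real.sqrt k ∧
    (∀ g ∈ B, (m : ℝ) ^ ((1 : ℝ) / (2 * (k : ℝ) - 1)) ≤ ((X ⟨n - 1, by omega⟩).erase g).sum w) ∧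
    (∀ v : Fin n → Fin m → ℝ, (∀ i g, 0 ≤ v i g) → v ⟨n - 2, by omega⟩ = w →
      ∀ α : ℝ, Real.sqrt k * (m : ℝ) ^ (-(1 : ℝ) / (2 * (k : ℝ) - 1)) < α →
        ¬ (∀ i j : Fin n, X j ≠ ∅ → ∀ g ∈ X j,
            α * ((X j).erase g).sum (v i) ≤ (X i).sum (v i))) := by
  have hm' : (0:ℝ) < m := by exact_mod_cast hm
  have hw0 : ∀ g : Fin m, 0 ≤ w g := by
    intro g
    rcases hcoverG g with h | h | ⟨ℓ, h1, h2, h3⟩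
    · rw [hwT g h]; exact Real.sqrt_nonneg _
    · rw [hwB g h]
    · by_cases hℓ : ℓ = lam
      · subst hℓ; rw [hwSlam g h3]; exact (Real.rpow_pos_of_pos hm' _).le
      · rw [hwS ℓ h1 h2 hℓ g h3]; exact (Real.rpow_pos_of_pos hm' _).le
  have part1 : (X ⟨n - 2, by omega⟩).sum w = Real.sqrt k := by
    rw [hXn1, Finset.sum_singleton, hwT g' hg']
  have part2 : ∀ g ∈ B, (m : ℝ) ^ ((1 : ℝ) / (2 * (k : ℝ) - 1)) ≤
      ((X ⟨n - 1, by omega⟩).erase g).sum w := by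
    intro g hg
    rw [hXn]
    have hsub : S lam ⊆ (Finset.univ \ T).erase g := by
      intro x hx
      refine Finset.mem_erase.mpr ⟨?_, ?_⟩
      · intro hxg; subst hxg
        exact (hBS lam hlam1 hlamk).forall_ne_finset hg hx rfl
      · exact Finset.mem_sdiff.mpr ⟨Finset.mem_univ _,
          fun hxT => (hTS lam hlam1 hlamk).forall_ne_finset hxT hx rfl⟩
    have h1 : (S lam).sum w ≤ ((Finset.univ \ T).erase g).sum w :=
      Finset.sum_le_sum_of_subset_of_nonneg hsub (fun x _ _ => hw0 x)
    have h2 : (S lam).sum w = ((S lam).card : ℝ) *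
        (m : ℝ) ^ (-(2 * ((lam : ℝ) - 1)) / (2 * (k : ℝ) - 1)) := by
      rw [Finset.sum_congr rfl (fun x hx => hwSlam x hx), Finset.sum_const,
        nsmul_eq_mul]
    refine le_trans ?_ (h2 ▸ h1)
    have hc : (0:ℝ) ≤ (m : ℝ) ^ (-(2 * ((lam : ℝ) - 1)) / (2 * (k : ℝ) - 1)) :=
      (Real.rpow_pos_of_pos hm' _).le
    calc (m : ℝ) ^ ((1 : ℝ) / (2 * (k : ℝ) - 1))
        = (m : ℝ) ^ ((2 * (lam : ℝ) - 1) / (2 * (k : ℝ) - 1)) *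
          (m : ℝ) ^ (-(2 * ((lam : ℝ) - 1)) / (2 * (k : ℝ) - 1)) := by
          rw [← Real.rpow_add hm', ← add_div]
          ring_nf
      _ ≤ _ := mul_le_mul_of_nonneg_right hSlam hc
  refine ⟨part1, part2, ?_⟩
  intro v hv0 hvw α hα hEFX
  obtain ⟨g, hg⟩ := Finset.nonempty_iff_ne_empty.mpr hB
  have hij : (⟨n - 2, by omega⟩ : Fin n) ≠ ⟨n - 1, by omega⟩ := by
    simp only [ne_eq, Fin.mk.injEq]; omega
  have hgX : g ∈ X ⟨n - 1, by omega⟩ := by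
    rw [hXn]
    exact Finset.mem_sdiff.mpr ⟨Finset.mem_univ _,
      fun hgT => hTB.forall_ne_finset hgT hg rfl⟩
  have hne : X ⟨n - 1, by omega⟩ ≠ ∅ := by
    intro h; rw [h] at hgX; exact absurd hgX (Finset.notMem_empty g)
  have key := hEFX ⟨n - 2, by omega⟩ ⟨n - 1, by omega⟩ hne g hgX
  rw [hvw, part1] at key
  have hs := part2 g hg
  have hαpos : 0 < α := lt_of_le_of_lt (by positivity) hα
  have hcontra : Real.sqrt k < α * ((X ⟨n - 1, by omega⟩).erase g).sum w := by
    calc Real.sqrt k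
        = Real.sqrt k * (m : ℝ) ^ (-(1 : ℝ) / (2 * (k : ℝ) - 1)) *
          (m : ℝ) ^ ((1 : ℝ) / (2 * (k : ℝ) - 1)) := by
          have h0 : (-1:ℝ) / (2 * (k : ℝ) - 1) + 1 / (2 * (k : ℝ) - 1) = 0 := by
            ring
          rw [mul_assoc, ← Real.rpow_add hm', h0, Real.rpow_zero, mul_one]
      _ < α * (m : ℝ) ^ ((1 : ℝ) / (2 * (k : ℝ) - 1)) :=
          mul_lt_mul_of_pos_right hα (Real.rpow_pos_of_pos hm' _)
      _ ≤ α * ((X ⟨n - 1, by omega⟩).erase g).sum w :=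
          mul_le_mul_of_nonneg_left hs hαpos.le
  exact absurd key (not_le.mpr hcontra)
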